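/- Let μ be a Borel measure on ℝ, finite on all compact sets, such that μ([0,∞)) < ∞ and ∫_ℝ e^{−β₀ |x|^{3/2}} dμ(x) < ∞ for some β₀ ∈ (0,1). Then for every t > 0 and every β ∈ (β₀, 1): ∫_ℝ e^{t} · ( ∫_ℝ e^{−β |x + z − √2 t|^{3/2}} dγ_t(z) ) dμ(x) < ∞. -/

import Mathlib

open Real MeasureTheory ProbabilityTheory
open scoped ENNReal NNReal


/-- Splitting inequality for the 3/2 power: if `w ≤ u + v` then
`s^{3/2} w^{3/2} ≤ u^{3/2} + (s/(1-s))^{3/2} v^{3/2}`. -/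
lemma rpow_split_aux (s u v w : ℝ) (hs : 0 < s) (hs1 : s < 1)
    (hu : 0 ≤ u) (hv : 0 ≤ v) (hw : 0 ≤ w) (h : w ≤ u + v) :
    s ^ ((3:ℝ)/2) * w ^ ((3:ℝ)/2)
      ≤ u ^ ((3:ℝ)/2) + (s/(1-s)) ^ ((3:ℝ)/2) * v ^ ((3:ℝ)/2) := by
  have h1s : 0 < 1 - s := by linarith
  rcases le_or_gt (s * v) ((1 - s) * u) with hc | hc
  · have hsw : s * w ≤ u := by nlinarith
    have h2 := Real.rpow_le_rpow (by positivity) hsw (by norm_num : (0:ℝ) ≤ 3/2)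
    rw [Real.mul_rpow hs.le hw] at h2
    have hnn : 0 ≤ (s/(1-s)) ^ ((3:ℝ)/2) * v ^ ((3:ℝ)/2) := by positivity
    linarith
  · have hsw : (1 - s) * w ≤ v := by nlinarith
    have h2 := Real.rpow_le_rpow (by positivity) hsw (by norm_num : (0:ℝ) ≤ 3/2)
    rw [Real.mul_rpow h1s.le hw] at h2
    have h3 : s ^ ((3:ℝ)/2) * w ^ ((3:ℝ)/2) ≤ (s/(1-s)) ^ ((3:ℝ)/2) * v ^ ((3:ℝ)/2) := by
      rw [Real.div_rpow hs.le h1s.le, div_mul_eq_mul_div, le_div_iff₀ (by positivity)]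
      calc s ^ ((3:ℝ)/2) * w ^ ((3:ℝ)/2) * (1-s) ^ ((3:ℝ)/2)
          = s ^ ((3:ℝ)/2) * ((1-s) ^ ((3:ℝ)/2) * w ^ ((3:ℝ)/2)) := by ring
        _ ≤ s ^ ((3:ℝ)/2) * v ^ ((3:ℝ)/2) := by
            exact mul_le_mul_of_nonneg_left h2 (by positivity)
    have hnn : 0 ≤ u ^ ((3:ℝ)/2) := by positivity
    linarith

/-- `K u^{3/2} ≤ ε u² + K⁴/ε³` for `u ≥ 0`. -/
lemma young_aux (K ε u : ℝ) (hK : 0 < K) (hε : 0 < ε) (hu : 0 ≤ u) :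
    K * u ^ ((3:ℝ)/2) ≤ ε * u ^ 2 + K ^ 4 / ε ^ 3 := by
  have hKε : 0 < K / ε := by positivity
  rcases le_or_gt u ((K/ε)^2) with hc | hc
  · have h2 : u ^ ((3:ℝ)/2) ≤ ((K/ε)^2) ^ ((3:ℝ)/2) :=
      Real.rpow_le_rpow hu hc (by norm_num)
    have h3 : ((K/ε)^2) ^ ((3:ℝ)/2) = (K/ε)^3 := by
      rw [← Real.rpow_natCast (K/ε) 2, ← Real.rpow_mul hKε.le, ← Real.rpow_natCast (K/ε) 3]
      norm_num
    have h4 : K * u ^ ((3:ℝ)/2) ≤ K * (K/ε)^3 := by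
      rw [h3] at h2; exact mul_le_mul_of_nonneg_left h2 hK.le
    have h5 : K * (K/ε)^3 = K^4 / ε^3 := by field_simp
    nlinarith [sq_nonneg u, mul_nonneg hε.le (sq_nonneg u)]
  · have hu0 : 0 < u := lt_of_le_of_lt (by positivity) hc
    have h2 : K / ε ≤ u ^ ((1:ℝ)/2) := by
      have := Real.rpow_le_rpow (by positivity : (0:ℝ) ≤ (K/ε)^2) hc.le
        (by norm_num : (0:ℝ) ≤ 1/2)
      rwa [← Real.rpow_natCast (K/ε) 2, ← Real.rpow_mul hKε.le, show ((2:ℕ):ℝ) * (1/2) = 1 by norm_num,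
        Real.rpow_one] at this
    have h3 : u ^ ((1:ℝ)/2) * u ^ ((3:ℝ)/2) = u ^ 2 := by
      rw [← Real.rpow_add hu0, ← Real.rpow_natCast u 2]; norm_num
    have h4 : K * u ^ ((3:ℝ)/2) ≤ ε * (u ^ ((1:ℝ)/2) * u ^ ((3:ℝ)/2)) := by
      have : K * u ^ ((3:ℝ)/2) = ε * ((K/ε) * u ^ ((3:ℝ)/2)) := by field_simp
      rw [this]
      have hun : 0 ≤ u ^ ((3:ℝ)/2) := by positivity
      have := mul_le_mul_of_nonneg_right h2 hun
      nlinarith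
    rw [h3] at h4
    nlinarith [pow_pos hK 4, pow_pos hε 3, div_pos (pow_pos hK 4) (pow_pos hε 3)]

/-- Analytic content (via the many-to-one lemma) of the second half of Proposition 4.2:
if `μ ∈ M_{3/2}` (locally finite, finite on `[0,∞)`, with `∫ e^{−β₀|x|^{3/2}} dμ < ∞`
for some `β₀ ∈ (0,1)`), then for every `t > 0` and every `β ∈ (β₀, 1)`,
`∫ eᵗ · (∫ e^{−β|x + z − √2 t|^{3/2}} dγ_t(z)) dμ(x) < ∞`, where `γ_t` is the centred
Gaussian measure of variance `t`. -/
theorem expected_weight_finite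
    (μ : Measure ℝ) (hloc : ∀ C : Set ℝ, IsCompact C → μ C < ⊤)
    (hpos : μ (Set.Ici (0 : ℝ)) < ⊤)
    (β₀ : ℝ) (hβ₀ : β₀ ∈ Set.Ioo (0 : ℝ) 1)
    (hint : ∫⁻ x : ℝ, ENNReal.ofReal (Real.exp (-β₀ * |x| ^ ((3 : ℝ) / 2))) ∂μ < ⊤)
    (t : ℝ) (ht : 0 < t) (β : ℝ) (hβ : β ∈ Set.Ioo β₀ 1) :
    ∫⁻ x : ℝ,
        ENNReal.ofReal (Real.exp t) *
          ∫⁻ z : ℝ,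
            ENNReal.ofReal
              (Real.exp (-β * |x + z - Real.sqrt 2 * t| ^ ((3 : ℝ) / 2)))
            ∂(gaussianReal 0 t.toNNReal) ∂μ < ⊤ := by
  obtain ⟨hβ₀0, hβ₀1⟩ := hβ₀
  obtain ⟨hββ₀, hβ1⟩ := hβ
  have hβ0 : 0 < β := hβ₀0.trans hββ₀
  set a : ℝ := Real.sqrt 2 * t with ha
  -- the constant s
  set s : ℝ := (β₀ / β) ^ ((2:ℝ)/3) with hs_def
  have hq0 : 0 < β₀ / β := div_pos hβ₀0 hβ0
  have hq1 : β₀ / β < 1 := (div_lt_one hβ0).mpr hββ₀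
  have hs0 : 0 < s := Real.rpow_pos_of_pos hq0 _
  have hs1 : s < 1 := Real.rpow_lt_one hq0.le hq1 (by norm_num)
  have hsp : β * s ^ ((3:ℝ)/2) = β₀ := by
    rw [hs_def, ← Real.rpow_mul hq0.le]
    norm_num
    field_simp
  -- constant K
  set K : ℝ := β * (s/(1-s)) ^ ((3:ℝ)/2) with hK_def
  have hK0 : 0 < K := by
    have : 0 < s / (1 - s) := div_pos hs0 (by linarith)
    positivity
  -- pointwise bound for the inner integrand
  have key : ∀ x z : ℝ,
      Real.exp (-β * |x + z - a| ^ ((3:ℝ)/2))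
        ≤ Real.exp (-β₀ * |x| ^ ((3:ℝ)/2)) * Real.exp (K * |z - a| ^ ((3:ℝ)/2)) := by
    intro x z
    rw [← Real.exp_add]
    apply Real.exp_le_exp.mpr
    have habs : |x| ≤ |x + z - a| + |z - a| := by
      have h := abs_sub (x + z - a) (z - a)
      have he : x + z - a - (z - a) = x := by ring
      rwa [he] at h
    have h1 := rpow_split_aux s (|x + z - a|) (|z - a|) (|x|) hs0 hs1
      (abs_nonneg _) (abs_nonneg _) (abs_nonneg _) habs
    nlinarith [abs_nonneg (x + z - a), abs_nonneg (z - a), abs_nonneg x,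
      Real.rpow_nonneg (abs_nonneg (x + z - a)) ((3:ℝ)/2),
      Real.rpow_nonneg (abs_nonneg (z - a)) ((3:ℝ)/2),
      Real.rpow_nonneg (abs_nonneg x) ((3:ℝ)/2)]
  -- the Gaussian integral I
  set γ : Measure ℝ := gaussianReal 0 t.toNNReal with hγ
  set I : ℝ≥0∞ := ∫⁻ z : ℝ, ENNReal.ofReal (Real.exp (K * |z - a| ^ ((3:ℝ)/2))) ∂γ with hI
  -- bound the Gaussian integrand by an integrable function
  set ε : ℝ := 1 / (8 * t) with hε_def
  have hε0 : 0 < ε := by positivity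
  set D : ℝ := K ^ 4 / ε ^ 3 + 2 * ε * a ^ 2 with hD
  have hbound : ∀ z : ℝ, Real.exp (K * |z - a| ^ ((3:ℝ)/2))
      ≤ Real.exp (z ^ 2 / (4 * t) + D) := by
    intro z
    apply Real.exp_le_exp.mpr
    have h1 := young_aux K ε (|z - a|) hK0 hε0 (abs_nonneg _)
    rw [sq_abs] at h1
    have h2 : (z - a) ^ 2 ≤ 2 * z ^ 2 + 2 * a ^ 2 := by nlinarith [sq_nonneg (z + a)]
    have h3 : ε * (2 * z ^ 2) = z ^ 2 / (4 * t) := by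
      rw [hε_def]; field_simp; ring
    nlinarith
  have hI_lt : I < ⊤ := by
    have htnn : (t.toNNReal : ℝ) = t := Real.coe_toNNReal t ht.le
    have htnn0 : t.toNNReal ≠ 0 := by
      simp only [ne_eq, Real.toNNReal_eq_zero, not_le]; exact ht
    -- the dominating real function
    set g : ℝ → ℝ := fun z => Real.exp (z ^ 2 / (4 * t) + D) * gaussianPDFReal 0 t.toNNReal z
      with hg
    have hg_eq : g = fun z =>
        (Real.exp D * (Real.sqrt (2 * π * t))⁻¹) * Real.exp (-(1/(4*t)) * z ^ 2) := by
      funext z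
      have ht' : t ≠ 0 := ht.ne'
      have hA : Real.exp (z ^ 2 / (4 * t) + D) * Real.exp (-(z : ℝ) ^ 2 / (2 * t))
          = Real.exp D * Real.exp (-(1/(4*t)) * z ^ 2) := by
        rw [← Real.exp_add, ← Real.exp_add]
        congr 1
        field_simp
        ring
      simp only [hg, gaussianPDFReal, htnn, sub_zero]
      linear_combination (Real.sqrt (2 * π * t))⁻¹ * hA
    have hg_int : Integrable g := by
      rw [hg_eq]
      exact (integrable_exp_neg_mul_sq (by positivity : (0:ℝ) < 1/(4*t))).const_mul _
    calc I ≤ ∫⁻ z : ℝ, ENNReal.ofReal (Real.exp (z ^ 2 / (4 * t) + D)) ∂γ := by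
          apply lintegral_mono
          intro z
          exact ENNReal.ofReal_le_ofReal (hbound z)
      _ = ∫⁻ z : ℝ, ENNReal.ofReal (g z) ∂(volume : Measure ℝ) := by
          rw [hγ, gaussianReal_of_var_ne_zero 0 htnn0,
            lintegral_withDensity_eq_lintegral_mul _ (measurable_gaussianPDF 0 t.toNNReal)
              (by fun_prop)]
          congr 1
          funext z
          simp only [Pi.mul_apply, gaussianPDF, hg]
          rw [← ENNReal.ofReal_mul (gaussianPDFReal_nonneg 0 t.toNNReal z),
            mul_comm (gaussianPDFReal 0 t.toNNReal z)]
      _ < ⊤ := hg_int.lintegral_lt_top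
  -- assemble
  have hmain : ∀ x : ℝ,
      (∫⁻ z : ℝ, ENNReal.ofReal (Real.exp (-β * |x + z - a| ^ ((3:ℝ)/2))) ∂γ)
        ≤ ENNReal.ofReal (Real.exp (-β₀ * |x| ^ ((3:ℝ)/2))) * I := by
    intro x
    rw [hI, ← lintegral_const_mul' _ _ ENNReal.ofReal_ne_top]
    apply lintegral_mono
    intro z
    dsimp only
    rw [← ENNReal.ofReal_mul (Real.exp_nonneg _)]
    exact ENNReal.ofReal_le_ofReal (key x z)
  calc ∫⁻ x : ℝ, ENNReal.ofReal (Real.exp t) *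
          ∫⁻ z : ℝ, ENNReal.ofReal (Real.exp (-β * |x + z - a| ^ ((3:ℝ)/2))) ∂γ ∂μ
      ≤ ∫⁻ x : ℝ, (ENNReal.ofReal (Real.exp t) * I) *
          ENNReal.ofReal (Real.exp (-β₀ * |x| ^ ((3:ℝ)/2))) ∂μ := by
        apply lintegral_mono
        intro x
        calc ENNReal.ofReal (Real.exp t) *
            ∫⁻ z : ℝ, ENNReal.ofReal (Real.exp (-β * |x + z - a| ^ ((3:ℝ)/2))) ∂γ
            ≤ ENNReal.ofReal (Real.exp t) *
              (ENNReal.ofReal (Real.exp (-β₀ * |x| ^ ((3:ℝ)/2))) * I) :=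
              mul_le_mul_right (hmain x) _
          _ = (ENNReal.ofReal (Real.exp t) * I) *
              ENNReal.ofReal (Real.exp (-β₀ * |x| ^ ((3:ℝ)/2))) := by ring
    _ = (ENNReal.ofReal (Real.exp t) * I) *
          ∫⁻ x : ℝ, ENNReal.ofReal (Real.exp (-β₀ * |x| ^ ((3:ℝ)/2))) ∂μ :=
        lintegral_const_mul' _ _ (ENNReal.mul_ne_top ENNReal.ofReal_ne_top hI_lt.ne)
    _ < ⊤ := ENNReal.mul_lt_top
        (ENNReal.mul_lt_top ENNReal.ofReal_lt_top hI_lt) hint
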